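/- Let p ≥ 1 be real and let F : [0,1] → [0,∞) be continuous with liminf_{s→0⁺} F(s)/s^p = k for some k ∈ (0,∞], and lim_{s→1⁻} F(s)/(1−s) = k₁ for some k₁ ∈ (0,∞). Let u : ℝ → [0,1] be continuous with ∫_ℝ F(u(ξ)) dξ < ∞, lim_{ξ→+∞} u(ξ) = 0 and lim_{ξ→−∞} u(ξ) = 1. Then ∫_0^∞ u(ξ)^p dξ < ∞ and ∫_{−∞}^0 (1 − u(ξ)) dξ < ∞. -/

import Mathlib

open MeasureTheory
open scoped ENNReal

/-- Integrability of a traveling-wave profile: if the reaction term `F ≥ 0` is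
continuous on `[0,1]` with `liminf_{s→0⁺} F(s)/s^p = k ∈ (0,∞]` and
`lim_{s→1⁻} F(s)/(1-s) = k₁ ∈ (0,∞)`, and if a continuous profile
`u : ℝ → [0,1]` satisfies `∫_ℝ F(u) < ∞`, `u → 0` at `+∞` and `u → 1` at `-∞`,
then `u^p` is integrable on `(0,∞)` and `1 - u` is integrable on `(-∞,0)`. -/
theorem stmt16 (p : ℝ) (hp : 1 ≤ p) (F : ℝ → ℝ)
    (hFc : ContinuousOn F (Set.Icc 0 1))
    (hFnn : ∀ s ∈ Set.Icc (0:ℝ) 1, 0 ≤ F s)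
    (k : ℝ≥0∞) (hk : 0 < k)
    (hliminf : Filter.liminf (fun s => ENNReal.ofReal (F s / s ^ p))
      (nhdsWithin 0 (Set.Ioi 0)) = k)
    (k₁ : ℝ) (hk₁ : 0 < k₁)
    (hlim1 : Filter.Tendsto (fun s => F s / (1 - s))
      (nhdsWithin 1 (Set.Iio 1)) (nhds k₁))
    (u : ℝ → ℝ) (huc : Continuous u)
    (humem : ∀ ξ : ℝ, u ξ ∈ Set.Icc (0:ℝ) 1)
    (hFint : Integrable (fun ξ => F (u ξ)))
    (h0 : Filter.Tendsto u Filter.atTop (nhds 0))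
    (h1 : Filter.Tendsto u Filter.atBot (nhds 1)) :
    IntegrableOn (fun ξ => u ξ ^ p) (Set.Ioi 0) ∧
    IntegrableOn (fun ξ => 1 - u ξ) (Set.Iio 0) := by
  have hp0 : (0:ℝ) < p := lt_of_lt_of_le one_pos hp
  -- extract ε with F s ≥ ε s^p near 0
  obtain ⟨c, hc0, hck⟩ := exists_between hk
  have hcne : c ≠ ⊤ := (hck.trans_le le_top).ne
  set ε := c.toReal with hεdef
  have hε0 : 0 < ε := ENNReal.toReal_pos hc0.ne' hcne
  have hev0 : ∀ᶠ s in nhdsWithin 0 (Set.Ioi 0), ε < F s / s ^ p := by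
    have hlt : ENNReal.ofReal ε <
        Filter.liminf (fun s => ENNReal.ofReal (F s / s ^ p))
          (nhdsWithin 0 (Set.Ioi 0)) := by
      rw [hliminf, hεdef, ENNReal.ofReal_toReal hcne]; exact hck
    filter_upwards [Filter.eventually_lt_of_lt_liminf hlt] with s hs
    have hpos : 0 < F s / s ^ p :=
      ENNReal.ofReal_pos.mp (lt_of_le_of_lt zero_le hs)
    exact (ENNReal.ofReal_lt_ofReal_iff hpos).mp hs
  obtain ⟨δ, hδ0, hδ⟩ := Metric.mem_nhdsWithin_iff.mp hev0
  -- near 1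
  have hev1 : ∀ᶠ s in nhdsWithin 1 (Set.Iio 1), k₁ / 2 < F s / (1 - s) :=
    hlim1.eventually_const_lt (half_lt_self hk₁)
  obtain ⟨δ₁, hδ₁0, hδ₁⟩ := Metric.mem_nhdsWithin_iff.mp hev1
  -- thresholds
  obtain ⟨M₀, hM₀⟩ := Filter.eventually_atTop.mp (h0.eventually_lt_const hδ0)
  set M : ℝ := max M₀ 0 with hMdef
  have hM : ∀ ξ ≥ M, u ξ < δ := fun ξ hξ => hM₀ ξ (le_trans (le_max_left _ _) hξ)
  obtain ⟨N₀, hN₀⟩ := Filter.eventually_atBot.mp (h1.eventually_const_lt (by linarith : 1 - δ₁ < 1))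
  set N : ℝ := min N₀ 0 with hNdef
  have hN : ∀ ξ ≤ N, 1 - δ₁ < u ξ := fun ξ hξ => hN₀ ξ (le_trans hξ (min_le_left _ _))
  have hupc : Continuous fun ξ => u ξ ^ p :=
    huc.rpow_const (fun x => Or.inr (le_of_lt hp0))
  constructor
  · have h1i : IntegrableOn (fun ξ => u ξ ^ p) (Set.Ioc 0 M) :=
      hupc.integrableOn_Ioc
    have h2i : IntegrableOn (fun ξ => u ξ ^ p) (Set.Ioi M) := by
      have hg : IntegrableOn (fun ξ => ε⁻¹ * F (u ξ)) (Set.Ioi M) :=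
        (hFint.integrableOn).const_mul _
      refine hg.mono' hupc.aestronglyMeasurable.restrict ?_
      filter_upwards [ae_restrict_mem measurableSet_Ioi] with ξ hξ
      have hu01 := humem ξ
      have hFnnξ : 0 ≤ F (u ξ) := hFnn _ hu01
      rw [Real.norm_eq_abs, abs_of_nonneg (Real.rpow_nonneg hu01.1 p)]
      rcases eq_or_lt_of_le hu01.1 with h | h
      · have hz : u ξ ^ p = 0 := by rw [← h, Real.zero_rpow (ne_of_gt hp0)]
        rw [hz]
        exact mul_nonneg (inv_nonneg.mpr hε0.le) hFnnξ
      · have hlt : u ξ < δ := hM ξ (le_of_lt hξ)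
        have hdist : dist (u ξ) 0 < δ := by
          rw [Real.dist_eq, sub_zero, abs_of_nonneg hu01.1]; exact hlt
        have hb : ε < F (u ξ) / u ξ ^ p := hδ ⟨Metric.mem_ball.mpr hdist, h⟩
        have hxp : 0 < u ξ ^ p := Real.rpow_pos_of_pos h p
        have h' : ε * u ξ ^ p < F (u ξ) := (lt_div_iff₀ hxp).mp hb
        have h2 : ε⁻¹ * (ε * u ξ ^ p) ≤ ε⁻¹ * F (u ξ) :=
          mul_le_mul_of_nonneg_left h'.le (inv_nonneg.mpr hε0.le)
        rwa [← mul_assoc, inv_mul_cancel₀ hε0.ne', one_mul] at h2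
    have : Set.Ioi (0:ℝ) = Set.Ioc 0 M ∪ Set.Ioi M :=
      (Set.Ioc_union_Ioi_eq_Ioi (le_max_right M₀ 0)).symm
    rw [this]
    exact h1i.union h2i
  · have hcont : Continuous fun ξ => 1 - u ξ := continuous_const.sub huc
    have h1i : IntegrableOn (fun ξ => 1 - u ξ) (Set.Ico N 0) :=
      hcont.integrableOn_Icc.mono_set Set.Ico_subset_Icc_self
    have h2i : IntegrableOn (fun ξ => 1 - u ξ) (Set.Iio N) := by
      have hg : IntegrableOn (fun ξ => (2 / k₁) * F (u ξ)) (Set.Iio N) :=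
        (hFint.integrableOn).const_mul _
      refine hg.mono' hcont.aestronglyMeasurable.restrict ?_
      filter_upwards [ae_restrict_mem measurableSet_Iio] with ξ hξ
      have hu01 := humem ξ
      have hFnnξ : 0 ≤ F (u ξ) := hFnn _ hu01
      rw [Real.norm_eq_abs, abs_of_nonneg (by linarith [hu01.2] : (0:ℝ) ≤ 1 - u ξ)]
      rcases eq_or_lt_of_le hu01.2 with h | h
      · have hz : 1 - u ξ = 0 := by rw [h, sub_self]
        rw [hz]
        exact mul_nonneg (by positivity) hFnnξ
      · have hlt : 1 - δ₁ < u ξ := hN ξ (le_of_lt hξ)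
        have hdist : dist (u ξ) 1 < δ₁ := by
          rw [Real.dist_eq, abs_of_nonpos (by linarith : u ξ - 1 ≤ 0)]; linarith
        have hb : k₁ / 2 < F (u ξ) / (1 - u ξ) := hδ₁ ⟨Metric.mem_ball.mpr hdist, h⟩
        have hxp : 0 < 1 - u ξ := by linarith
        have h' : k₁ / 2 * (1 - u ξ) < F (u ξ) := (lt_div_iff₀ hxp).mp hb
        rw [div_mul_eq_mul_div, le_div_iff₀ hk₁]
        nlinarith
    have : Set.Iio (0:ℝ) = Set.Iio N ∪ Set.Ico N 0 :=
      (Set.Iio_union_Ico_eq_Iio (min_le_right N₀ 0)).symm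
    rw [this]
    exact h2i.union h1i
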